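/- Greedy optimality for nested cardinality constraints: minimize Σ_u w_u x_u over x ∈ {0,1}^N subject to Σ_{u : d_u ≥ d} x_u ≤ b_d for all thresholds d ∈ {0,1,…,D}, where b is derived from a reference column so that b_d is non-increasing in d. The greedy algorithm that sorts items by weight w_u ascending, skips items with w_u ≥ 0, and includes an item iff its inclusion keeps all constraints Σ_{selected, d_u' ≥ d} 1 ≤ b_d satisfied, produces an optimal solution. -/

import Mathlib

open Classical in
/-- Greedy selection along a list: include an item iff the result stays feasible. -/
noncomputable def greedySelect {α : Type*} [DecidableEq α] (feas : Finset α → Prop) :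
    List α → Finset α → Finset α
  | [], S => S
  | u :: rest, S =>
      if feas (insert u S) then greedySelect feas rest (insert u S)
      else greedySelect feas rest S

/-- Downward closure of nested cardinality feasibility. -/
lemma gs_down {N : Type*} [DecidableEq N] (D : ℕ) (d : N → ℕ) (b : ℕ → ℕ)
    (feas : Finset N → Prop)
    (hfeasdef : ∀ S : Finset N,
      feas S ↔ ∀ dd ≤ D, (S.filter (fun u => dd ≤ d u)).card ≤ b dd) :
    ∀ S T : Finset N, S ⊆ T → feas T → feas S := by
  intro S T hST hT
  rw [hfeasdef] at hT ⊢
  intro dd hdd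
  exact le_trans (Finset.card_le_card (Finset.filter_subset_filter _ hST)) (hT dd hdd)

/-- Exchange property for nested cardinality constraints. -/
lemma gs_exch {N : Type*} [DecidableEq N] (D : ℕ) (d : N → ℕ) (hdD : ∀ u, d u ≤ D)
    (b : ℕ → ℕ) (feas : Finset N → Prop)
    (hfeasdef : ∀ S : Finset N,
      feas S ↔ ∀ dd ≤ D, (S.filter (fun u => dd ≤ d u)).card ≤ b dd) :
    ∀ (A B : Finset N) (u : N), A ⊆ B → u ∉ B → feas (insert u A) → feas B →
      ¬ feas (insert u B) →
      ∃ z ∈ B, z ∉ A ∧ z ≠ u ∧ feas (insert u (B.erase z)) := by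
  intro A B u hAB huB hA1 hB hnfB
  have huA : u ∉ A := fun h => huB (hAB h)
  rw [hfeasdef] at hnfB
  push_neg at hnfB
  obtain ⟨t, htD, htc⟩ := hnfB
  -- the violated threshold must satisfy t ≤ d u and be tight for B
  have htu : t ≤ d u := by
    by_contra hnt
    rw [Finset.filter_insert, if_neg hnt] at htc
    exact absurd ((hfeasdef B).mp hB t htD) (not_le.mpr htc)
  have hcard : ((B.filter (fun x => t ≤ d x)).card ≤ b t) := (hfeasdef B).mp hB t htD
  rw [Finset.filter_insert, if_pos htu,
    Finset.card_insert_of_notMem (fun h => huB (Finset.mem_filter.mp h).1)] at htc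
  have htight : (B.filter (fun x => t ≤ d x)).card = b t := le_antisymm hcard (by omega)
  -- choose the maximal tight threshold t* ≤ d u
  set T : Finset ℕ :=
    (Finset.range (d u + 1)).filter (fun s => b s ≤ (B.filter (fun x => s ≤ d x)).card) with hT
  have htT : t ∈ T := by
    simp only [hT, Finset.mem_filter, Finset.mem_range]
    exact ⟨by omega, le_of_eq htight.symm⟩
  have hTne : T.Nonempty := ⟨t, htT⟩
  set ts := T.max' hTne with hts
  have htsT : ts ∈ T := T.max'_mem hTne
  have htsu : ts ≤ d u := by
    have := (Finset.mem_filter.mp htsT).1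
    simpa [Nat.lt_succ_iff] using Finset.mem_range.mp this
  have htsD : ts ≤ D := le_trans htsu (hdD u)
  have htstight : (B.filter (fun x => ts ≤ d x)).card = b ts :=
    le_antisymm ((hfeasdef B).mp hB ts htsD) (Finset.mem_filter.mp htsT).2
  -- find z in B with d z ≥ ts and z ∉ A
  have hAcard : (A.filter (fun x => ts ≤ d x)).card + 1 ≤ b ts := by
    have := (hfeasdef (insert u A)).mp hA1 ts htsD
    rwa [Finset.filter_insert, if_pos htsu,
      Finset.card_insert_of_notMem (fun h => huA (Finset.mem_filter.mp h).1)] at this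
  have hz : ∃ z ∈ B.filter (fun x => ts ≤ d x), z ∉ A := by
    by_contra h
    push_neg at h
    have hsub : B.filter (fun x => ts ≤ d x) ⊆ A.filter (fun x => ts ≤ d x) := by
      intro z hzm
      exact Finset.mem_filter.mpr ⟨h z hzm, (Finset.mem_filter.mp hzm).2⟩
    have := Finset.card_le_card hsub
    omega
  obtain ⟨z, hzm, hzA⟩ := hz
  obtain ⟨hzB, hzd⟩ := Finset.mem_filter.mp hzm
  refine ⟨z, hzB, hzA, fun h => huB (h ▸ hzB), ?_⟩
  rw [hfeasdef]
  intro s hsD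
  have hBs : (B.filter (fun x => s ≤ d x)).card ≤ b s := (hfeasdef B).mp hB s hsD
  by_cases hsu : s ≤ d u
  · rw [Finset.filter_insert, if_pos hsu,
      Finset.card_insert_of_notMem
        (fun h => huB (Finset.mem_of_mem_erase (Finset.mem_filter.mp h).1))]
    by_cases hsz : s ≤ d z
    · have hzmem : z ∈ B.filter (fun x => s ≤ d x) := Finset.mem_filter.mpr ⟨hzB, hsz⟩
      rw [Finset.filter_erase, Finset.card_erase_of_mem hzmem]
      have : 1 ≤ (B.filter (fun x => s ≤ d x)).card := Finset.card_pos.mpr ⟨z, hzmem⟩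
      omega
    · -- d z < s, so s > ts, hence s is not tight
      have hsts : ts < s := lt_of_le_of_lt hzd (not_le.mp hsz)
      have hsnT : s ∉ T := fun h => absurd (T.le_max' s h) (not_le.mpr hsts)
      have hslack : (B.filter (fun x => s ≤ d x)).card < b s := by
        by_contra hc
        exact hsnT (Finset.mem_filter.mpr ⟨Finset.mem_range.mpr (by omega), not_lt.mp hc⟩)
      have hsub : (B.erase z).filter (fun x => s ≤ d x) ⊆ B.filter (fun x => s ≤ d x) :=
        Finset.filter_subset_filter _ (Finset.erase_subset _ _)
      have := Finset.card_le_card hsub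
      omega
  · rw [Finset.filter_insert, if_neg hsu]
    have hsub : (B.erase z).filter (fun x => s ≤ d x) ⊆ B.filter (fun x => s ≤ d x) :=
      Finset.filter_subset_filter _ (Finset.erase_subset _ _)
    exact le_trans (Finset.card_le_card hsub) hBs

/-- Main inductive lemma: greedy along a sorted list of negative items starting from a
feasible set `A` beats every feasible `B ⊇ A` whose extra elements come from the list. -/
lemma gs_main {N : Type*} [DecidableEq N] (w : N → ℝ) (feas : Finset N → Prop)
    (hdown : ∀ S T : Finset N, S ⊆ T → feas T → feas S)
    (hexch : ∀ (A B : Finset N) (u : N), A ⊆ B → u ∉ B → feas (insert u A) → feas B →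
      ¬ feas (insert u B) →
      ∃ z ∈ B, z ∉ A ∧ z ≠ u ∧ feas (insert u (B.erase z))) :
    ∀ (L : List N), L.Pairwise (fun u v => w u ≤ w v) → (∀ x ∈ L, w x < 0) →
    ∀ A : Finset N, feas A →
      feas (greedySelect feas L A) ∧
      ∀ B : Finset N, feas B → A ⊆ B → B \ A ⊆ L.toFinset →
        ∑ u ∈ greedySelect feas L A, w u ≤ ∑ u ∈ B, w u := by
  intro L
  induction L with
  | nil =>
    intro _ _ A hA
    refine ⟨by simpa [greedySelect] using hA, ?_⟩
    intro B hB hAB hBA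
    have hBA' : B = A := by
      apply Finset.Subset.antisymm _ hAB
      intro x hx
      by_contra hxA
      have : x ∈ B \ A := Finset.mem_sdiff.mpr ⟨hx, hxA⟩
      simpa using hBA this
    simp [greedySelect, hBA']
  | cons u rest ih =>
    intro hsort hneg A hA
    obtain ⟨hhead, hsrest⟩ := List.pairwise_cons.mp hsort
    have hnegrest : ∀ x ∈ rest, w x < 0 := fun x hx => hneg x (List.mem_cons_of_mem _ hx)
    have hwu : w u < 0 := hneg u List.mem_cons_self
    by_cases hu : feas (insert u A)
    · have hgs : greedySelect feas (u :: rest) A = greedySelect feas rest (insert u A) := by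
        simp [greedySelect, hu]
      obtain ⟨hf, hopt⟩ := ih hsrest hnegrest (insert u A) hu
      rw [hgs]
      refine ⟨hf, ?_⟩
      intro B hB hAB hBA
      by_cases huB : u ∈ B
      · apply hopt B hB (Finset.insert_subset huB hAB)
        intro x hx
        obtain ⟨hxB, hxA⟩ := Finset.mem_sdiff.mp hx
        have hxu : x ≠ u := fun h => hxA (by rw [h]; exact Finset.mem_insert_self u A)
        have : x ∈ (u :: rest).toFinset :=
          hBA (Finset.mem_sdiff.mpr ⟨hxB, fun h => hxA (Finset.mem_insert_of_mem h)⟩)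
        simp only [List.toFinset_cons, Finset.mem_insert] at this
        exact this.resolve_left hxu
      · by_cases hfB : feas (insert u B)
        · have h1 := hopt (insert u B) hfB (Finset.insert_subset_insert u hAB) ?_
          · have h2 : ∑ x ∈ insert u B, w x = w u + ∑ x ∈ B, w x :=
              Finset.sum_insert huB
            linarith
          · intro x hx
            obtain ⟨hxB, hxA⟩ := Finset.mem_sdiff.mp hx
            have hxu : x ≠ u := fun h => hxA (by rw [h]; exact Finset.mem_insert_self u A)
            have hxB' : x ∈ B := (Finset.mem_insert.mp hxB).resolve_left hxu
            have : x ∈ (u :: rest).toFinset :=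
              hBA (Finset.mem_sdiff.mpr ⟨hxB', fun h => hxA (Finset.mem_insert_of_mem h)⟩)
            simp only [List.toFinset_cons, Finset.mem_insert] at this
            exact this.resolve_left hxu
        · obtain ⟨z, hzB, hzA, hzu, hfz⟩ := hexch A B u hAB huB hu hB hfB
          have hzrest : z ∈ rest := by
            have : z ∈ (u :: rest).toFinset := hBA (Finset.mem_sdiff.mpr ⟨hzB, hzA⟩)
            simp only [List.toFinset_cons, Finset.mem_insert] at this
            exact List.mem_toFinset.mp (this.resolve_left hzu)
          have hwz : w u ≤ w z := hhead z hzrest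
          have hAez : A ⊆ B.erase z := Finset.subset_erase.mpr ⟨hAB, hzA⟩
          have h1 := hopt (insert u (B.erase z)) hfz
            (Finset.insert_subset_insert u hAez) ?_
          · have huez : u ∉ B.erase z := fun h => huB (Finset.mem_of_mem_erase h)
            have h2 : ∑ x ∈ insert u (B.erase z), w x = w u + ∑ x ∈ B.erase z, w x :=
              Finset.sum_insert huez
            have h3 : ∑ x ∈ B.erase z, w x + w z = ∑ x ∈ B, w x :=
              Finset.sum_erase_add B w hzB
            linarith
          · intro x hx
            obtain ⟨hxB, hxA⟩ := Finset.mem_sdiff.mp hx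
            have hxu : x ≠ u := fun h => hxA (by rw [h]; exact Finset.mem_insert_self u A)
            have hxB' : x ∈ B :=
              Finset.mem_of_mem_erase ((Finset.mem_insert.mp hxB).resolve_left hxu)
            have hxA' : x ∉ A := fun h => hxA (Finset.mem_insert_of_mem h)
            have : x ∈ (u :: rest).toFinset := hBA (Finset.mem_sdiff.mpr ⟨hxB', hxA'⟩)
            simp only [List.toFinset_cons, Finset.mem_insert] at this
            exact this.resolve_left hxu
    · have hgs : greedySelect feas (u :: rest) A = greedySelect feas rest A := by
        simp [greedySelect, hu]
      obtain ⟨hf, hopt⟩ := ih hsrest hnegrest A hA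
      rw [hgs]
      refine ⟨hf, ?_⟩
      intro B hB hAB hBA
      have huB : u ∉ B := by
        intro huB
        exact hu (hdown (insert u A) B (Finset.insert_subset huB hAB) hB)
      apply hopt B hB hAB
      intro x hx
      have hxu : x ≠ u := fun h => huB (h ▸ (Finset.mem_sdiff.mp hx).1)
      have : x ∈ (u :: rest).toFinset := hBA hx
      simp only [List.toFinset_cons, Finset.mem_insert] at this
      exact this.resolve_left hxu

/-- greedy optimality for nested cardinality constraints: sorting the
negatively-weighted items by weight ascending and greedily inserting those that keep
all nested constraints satisfied yields a minimizer of `Σ w_u x_u`. -/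
theorem stmt15 {N : Type*} [Fintype N] [DecidableEq N]
    (D : ℕ) (d : N → ℕ) (hdD : ∀ u, d u ≤ D) (w : N → ℝ)
    (b : ℕ → ℕ) (hb : ∀ i j, i ≤ j → j ≤ D → b j ≤ b i)
    (feas : Finset N → Prop)
    (hfeasdef : ∀ S : Finset N,
      feas S ↔ ∀ dd ≤ D, (S.filter (fun u => dd ≤ d u)).card ≤ b dd)
    (L : List N) (hnd : L.Nodup)
    (hmem : ∀ u, u ∈ L ↔ w u < 0)
    (hsort : L.Pairwise (fun u v => w u ≤ w v)) :
    feas (greedySelect feas L ∅) ∧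
    ∀ S : Finset N, feas S →
      ∑ u ∈ greedySelect feas L ∅, w u ≤ ∑ u ∈ S, w u := by
  have hdown := gs_down D d b feas hfeasdef
  have hexch := gs_exch D d hdD b feas hfeasdef
  have hempty : feas (∅ : Finset N) := by
    rw [hfeasdef]; intro dd _; simp
  have hneg : ∀ x ∈ L, w x < 0 := fun x hx => (hmem x).mp hx
  obtain ⟨hf, hopt⟩ := gs_main w feas hdown hexch L hsort hneg ∅ hempty
  refine ⟨hf, ?_⟩
  intro S hS
  classical
  set B : Finset N := S.filter (fun x => w x < 0) with hBdef
  have hBS : B ⊆ S := Finset.filter_subset _ _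
  have hfB : feas B := hdown B S hBS hS
  have h1 : ∑ u ∈ greedySelect feas L ∅, w u ≤ ∑ u ∈ B, w u := by
    apply hopt B hfB (Finset.empty_subset B)
    intro x hx
    have hxB : x ∈ B := (Finset.mem_sdiff.mp hx).1
    have : w x < 0 := (Finset.mem_filter.mp hxB).2
    exact List.mem_toFinset.mpr ((hmem x).mpr this)
  have h2 : ∑ u ∈ B, w u ≤ ∑ u ∈ S, w u := by
    have hsplit := Finset.sum_filter_add_sum_filter_not S (fun x => w x < 0) w
    have hpos : 0 ≤ ∑ u ∈ S.filter (fun x => ¬ w x < 0), w u :=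
      Finset.sum_nonneg (fun x hx => not_lt.mp (Finset.mem_filter.mp hx).2)
    rw [hBdef]
    linarith
  linarith
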